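/- arXiv:1610.09289 — 2 statements merged into one kernel-verified Lean document; each statement's English description precedes it below -/
import Mathlib

section
/- Let X and Y be random variables on finite alphabets 𝒳 and 𝒴 with joint law P_{XY}. Then the Gács–Körner common information admits the characterization C_GK(X;Y) = inf { I(X,Y;U) : U a finite-alphabet auxiliary random variable jointly distributed with (X,Y) via a conditional distribution P_{U|XY}, such that C_GK(X;Y|U) = 0 }, where I(X,Y;U) denotes the mutual information between the pair (X,Y) and U. -/
open scoped BigOperators Classical

noncomputable section

namespace GCI

/-- A bundled finite alphabet. -/
structure FinAlph : Type 1 where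
  carrier : Type
  [fin : Fintype carrier]

instance : CoeSort FinAlph Type := ⟨FinAlph.carrier⟩
instance (A : FinAlph) : Fintype A := A.fin

variable {Ω : Type} [Fintype Ω]

/-- `p` is a probability mass function on the finite sample space `Ω`. -/
def IsPMF (p : Ω → ℝ) : Prop := (∀ ω, 0 ≤ p ω) ∧ ∑ ω, p ω = 1

/-- Expectation of a real random variable `f` under the pmf `p`. -/
def expec (p : Ω → ℝ) (f : Ω → ℝ) : ℝ := ∑ ω, p ω * f ω

/-- Marginal pmf of the random variable `X` under `p`. -/
def marg {𝒳 : Type} (p : Ω → ℝ) (X : Ω → 𝒳) (x : 𝒳) : ℝ :=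
  ∑ ω, if X ω = x then p ω else 0

/-- Conditional expectation `E[f | U = u]`. -/
def cexp {𝒰 : Type} (p : Ω → ℝ) (U : Ω → 𝒰) (u : 𝒰) (f : Ω → ℝ) : ℝ :=
  (∑ ω, if U ω = u then p ω * f ω else 0) / marg p U u

/-- `E[cov(f, g | U)]`. -/
def ccov {𝒰 : Type} (p : Ω → ℝ) (U : Ω → 𝒰) (f g : Ω → ℝ) : ℝ :=
  expec p fun ω => (f ω - cexp p U (U ω) f) * (g ω - cexp p U (U ω) g)

/-- `E[var(f | U)]`. -/
def cvar {𝒰 : Type} (p : Ω → ℝ) (U : Ω → 𝒰) (f : Ω → ℝ) : ℝ := ccov p U f f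

/-- Conditional Pearson correlation `ρ(f; g | U)`. -/
def ccorr {𝒰 : Type} (p : Ω → ℝ) (U : Ω → 𝒰) (f g : Ω → ℝ) : ℝ :=
  if 0 < cvar p U f * cvar p U g then
    ccov p U f g / (Real.sqrt (cvar p U f) * Real.sqrt (cvar p U g))
  else 0

/-- Conditional correlation ratio `θ(X; Y | U)` for a real-valued `X`. -/
def cratio {𝒴 𝒰 : Type} (p : Ω → ℝ) (U : Ω → 𝒰) (X : Ω → ℝ) (Y : Ω → 𝒴) : ℝ :=
  ⨆ g : 𝒴 × 𝒰 → ℝ, ccorr p U X fun ω => g (Y ω, U ω)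

/-- Conditional maximal correlation `ρ_m(X; Y | U)`. -/
def maxCorr {𝒳 𝒴 𝒰 : Type} (p : Ω → ℝ) (U : Ω → 𝒰) (X : Ω → 𝒳) (Y : Ω → 𝒴) : ℝ :=
  ⨆ f : 𝒳 × 𝒰 → ℝ, ⨆ g : 𝒴 × 𝒰 → ℝ,
    ccorr p U (fun ω => f (X ω, U ω)) fun ω => g (Y ω, U ω)

/-- Unconditional Pearson correlation. -/
def corr0 (p : Ω → ℝ) (f g : Ω → ℝ) : ℝ := ccorr p (fun _ => ()) f g

/-- Unconditional correlation ratio `θ(X;Y)`. -/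
def ratio0 {𝒴 : Type} (p : Ω → ℝ) (X : Ω → ℝ) (Y : Ω → 𝒴) : ℝ :=
  cratio p (fun _ => ()) X Y

/-- Unconditional maximal correlation `ρ_m(X;Y)`. -/
def maxCorr0 {𝒳 𝒴 : Type} (p : Ω → ℝ) (X : Ω → 𝒳) (Y : Ω → 𝒴) : ℝ :=
  maxCorr p (fun _ => ()) X Y

/-- Shannon entropy (base 2) of the random variable `X` under `p`. -/
def ent {𝒳 : Type} [Fintype 𝒳] (p : Ω → ℝ) (X : Ω → 𝒳) : ℝ :=
  ∑ x, -(marg p X x * Real.logb 2 (marg p X x))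

/-- Conditional Shannon entropy `H(X | U)`. -/
def condEnt {𝒳 𝒰 : Type} [Fintype 𝒳] [Fintype 𝒰] (p : Ω → ℝ) (X : Ω → 𝒳) (U : Ω → 𝒰) : ℝ :=
  ent p (fun ω => (X ω, U ω)) - ent p U

/-- Mutual information `I(X; U)`. -/
def mutInfo {𝒳 𝒰 : Type} [Fintype 𝒳] [Fintype 𝒰] (p : Ω → ℝ) (X : Ω → 𝒳) (U : Ω → 𝒰) : ℝ :=
  ent p X + ent p U - ent p fun ω => (X ω, U ω)

/-- Almost-sure equality of two discrete random variables. -/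
def AEEq {𝒱 : Type} (p : Ω → ℝ) (f g : Ω → 𝒱) : Prop := ∀ ω, 0 < p ω → f ω = g ω

/-- The Gács–Körner common information `C_GK(X;Y)`. -/
def CGK {𝒳 𝒴 : Type} (p : Ω → ℝ) (X : Ω → 𝒳) (Y : Ω → 𝒴) : ℝ :=
  sSup { r | ∃ (𝒱 : FinAlph) (f : 𝒳 → 𝒱) (g : 𝒴 → 𝒱),
    AEEq p (fun ω => f (X ω)) (fun ω => g (Y ω)) ∧ r = ent p fun ω => f (X ω) }

/-- The conditional Gács–Körner common information `C_GK(X;Y|U)`. -/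
def CGKcond {𝒳 𝒴 𝒰 : Type} [Fintype 𝒰] (p : Ω → ℝ) (X : Ω → 𝒳) (Y : Ω → 𝒴)
    (U : Ω → 𝒰) : ℝ :=
  sSup { r | ∃ (𝒱 : FinAlph) (f : 𝒳 × 𝒰 → 𝒱) (g : 𝒴 × 𝒰 → 𝒱),
    AEEq p (fun ω => f (X ω, U ω)) (fun ω => g (Y ω, U ω)) ∧
    r = condEnt p (fun ω => f (X ω, U ω)) U }

/-- The `β`-approximate common information (approximate information-correlation function). -/
def Cbeta {𝒳 𝒴 : Type} [Fintype 𝒳] [Fintype 𝒴] (p : 𝒳 × 𝒴 → ℝ) (β : ℝ) : ℝ :=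
  sInf { r | ∃ (𝒰 : FinAlph) (q : (𝒳 × 𝒴) × 𝒰 → ℝ),
    IsPMF q ∧ (∀ a, marg q Prod.fst a = p a) ∧
    maxCorr q Prod.snd (fun a => a.1.1) (fun a => a.1.2) ≤ β ∧
    r = mutInfo q Prod.fst Prod.snd }

/-- The `n`-th term in the definition of the `β`-exact common information:
the normalized smallest entropy of an auxiliary variable for `n` i.i.d. copies. -/
def KbetaN {𝒳 𝒴 : Type} [Fintype 𝒳] [Fintype 𝒴] (p : 𝒳 × 𝒴 → ℝ) (β : ℝ) (n : ℕ) : ℝ :=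
  sInf { r | ∃ (𝒰 : FinAlph) (q : ((Fin n → 𝒳) × (Fin n → 𝒴)) × 𝒰 → ℝ),
    IsPMF q ∧
    (∀ a : (Fin n → 𝒳) × (Fin n → 𝒴), marg q Prod.fst a = ∏ i, p (a.1 i, a.2 i)) ∧
    maxCorr q Prod.snd (fun a => a.1.1) (fun a => a.1.2) ≤ β ∧
    r = (1 / (n : ℝ)) * ent q Prod.snd }

/-- The `β`-exact common information (exact information-correlation function). -/
def Kbeta {𝒳 𝒴 : Type} [Fintype 𝒳] [Fintype 𝒴] (p : 𝒳 × 𝒴 → ℝ) (β : ℝ) : ℝ :=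
  Filter.limUnder Filter.atTop fun n => KbetaN p β n


section Lemmas
variable {𝒳 𝒴 𝒰 𝒱 : Type} {p : Ω → ℝ}

lemma marg_nonneg (hp : ∀ ω, 0 ≤ p ω) (X : Ω → 𝒳) (x : 𝒳) : 0 ≤ marg p X x :=
  Finset.sum_nonneg fun ω _ => by by_cases h : X ω = x <;> simp [h, hp ω]

lemma le_marg (hp : ∀ ω, 0 ≤ p ω) (X : Ω → 𝒳) (ω : Ω) : p ω ≤ marg p X (X ω) := by
  have := Finset.single_le_sum (f := fun ω' => if X ω' = X ω then p ω' else 0)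
    (fun ω' _ => by by_cases h : X ω' = X ω <;> simp [h, hp ω']) (Finset.mem_univ ω)
  simpa [marg] using this

lemma sum_marg [Fintype 𝒳] (X : Ω → 𝒳) : ∑ x, marg p X x = ∑ ω, p ω := by
  unfold marg; rw [Finset.sum_comm]
  exact Finset.sum_congr rfl fun ω _ => by simp

lemma isPMF_marg [Fintype 𝒳] (hp : IsPMF p) (X : Ω → 𝒳) : IsPMF (marg p X) :=
  ⟨marg_nonneg hp.1 X, by rw [sum_marg]; exact hp.2⟩

lemma marg_comp [Fintype 𝒳] (X : Ω → 𝒳) (k : 𝒳 → 𝒰) (u : 𝒰) :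
    marg p (fun ω => k (X ω)) u = marg (marg p X) k u := by
  unfold marg
  have : ∀ x : 𝒳, (if k x = u then ∑ ω : Ω, (if X ω = x then p ω else 0) else 0)
      = ∑ ω : Ω, (if X ω = x then (if k x = u then p ω else 0) else 0) := by
    intro x
    by_cases h : k x = u <;> simp [h]
  rw [Finset.sum_congr rfl fun x _ => this x, Finset.sum_comm]
  refine Finset.sum_congr rfl fun ω _ => ?_
  simp [Finset.sum_ite_eq]

lemma marg_congr (hp : ∀ ω, 0 ≤ p ω) {X X' : Ω → 𝒳} (h : AEEq p X X') :
    marg p X = marg p X' := by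
  funext x
  refine Finset.sum_congr rfl fun ω _ => ?_
  rcases lt_or_eq_of_le (hp ω) with hω | hω
  · rw [h ω hω]
  · by_cases h1 : X ω = x <;> by_cases h2 : X' ω = x <;> simp [h1, h2, ← hω]

lemma ent_congr [Fintype 𝒳] (hp : ∀ ω, 0 ≤ p ω) {X X' : Ω → 𝒳} (h : AEEq p X X') :
    ent p X = ent p X' := by
  unfold ent; rw [marg_congr hp h]

lemma ent_comp_inj [Fintype 𝒳] [Fintype 𝒰] (hp : ∀ ω, 0 ≤ p ω) (X : Ω → 𝒳) {e : 𝒳 → 𝒰}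
    (he : Function.Injective e) : ent p (fun ω => e (X ω)) = ent p X := by
  unfold ent
  have hm : ∀ x, marg p (fun ω => e (X ω)) (e x) = marg p X x := by
    intro x
    refine Finset.sum_congr rfl fun ω _ => ?_
    by_cases h : X ω = x
    · simp [h]
    · have : ¬ e (X ω) = e x := fun hc => h (he hc)
      simp [h, this]
  have hz : ∀ u : 𝒰, u ∉ Finset.univ.image e → marg p (fun ω => e (X ω)) u = 0 := by
    intro u hu
    refine Finset.sum_eq_zero fun ω _ => ?_
    have : ¬ e (X ω) = u := fun hc => hu (by simp [← hc])
    simp [this]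
  rw [← Finset.sum_subset (Finset.subset_univ (Finset.univ.image e))
    (fun u _ hu => by rw [hz u hu]; simp),
    Finset.sum_image (fun a _ b _ hab => he hab)]
  exact Finset.sum_congr rfl fun x _ => by rw [hm x]

lemma marg_snd_eval {A B : Type} [Fintype A] [Fintype B] (m : A × B → ℝ) (b : B) :
    marg m Prod.snd b = ∑ a, m (a, b) := by
  unfold marg
  rw [Fintype.sum_prod_type]
  refine Finset.sum_congr rfl fun a _ => ?_
  simp [Finset.sum_ite_eq]

lemma marg_fst_eval {A B : Type} [Fintype A] [Fintype B] (m : A × B → ℝ) (a : A) :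
    marg m Prod.fst a = ∑ b, m (a, b) := by
  unfold marg
  rw [Fintype.sum_prod_type_right]
  refine Finset.sum_congr rfl fun b _ => ?_
  simp [Finset.sum_ite_eq]

lemma ent_snd_le [Fintype 𝒳] [Fintype 𝒰] (hp : ∀ ω, 0 ≤ p ω) (X : Ω → 𝒳) (U : Ω → 𝒰) :
    ent p U ≤ ent p (fun ω => (X ω, U ω)) := by
  set m : 𝒳 × 𝒰 → ℝ := marg p (fun ω => (X ω, U ω)) with hmdef
  have hm : ∀ a, 0 ≤ m a := marg_nonneg hp _
  have hU : ∀ u, marg p U u = ∑ x, m (x, u) := by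
    intro u
    rw [← marg_snd_eval]
    exact marg_comp (fun ω => (X ω, U ω)) Prod.snd u
  have hR : ent p (fun ω => (X ω, U ω)) = ∑ u, ∑ x, -(m (x, u) * Real.logb 2 (m (x, u))) := by
    unfold ent
    rw [Fintype.sum_prod_type]
    exact Finset.sum_comm
  have hL : ent p U = ∑ u, ∑ x, -(m (x, u) * Real.logb 2 (marg p U u)) := by
    unfold ent
    refine Finset.sum_congr rfl fun u _ => ?_
    rw [Finset.sum_neg_distrib, ← Finset.sum_mul, ← hU u]
  rw [hL, hR]
  refine Finset.sum_le_sum fun u _ => Finset.sum_le_sum fun x _ => ?_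
  simp only [neg_le_neg_iff]
  rcases lt_or_eq_of_le (hm (x, u)) with h0 | h0
  · refine mul_le_mul_of_nonneg_left ?_ (le_of_lt h0)
    refine Real.logb_le_logb_of_le one_lt_two h0 ?_
    rw [hU u]
    exact Finset.single_le_sum (f := fun x' => m (x', u)) (fun x' _ => hm _) (Finset.mem_univ x)
  · rw [← h0]; simp

lemma condEnt_nonneg [Fintype 𝒳] [Fintype 𝒰] (hp : ∀ ω, 0 ≤ p ω) (X : Ω → 𝒳) (U : Ω → 𝒰) :
    0 ≤ condEnt p X U :=
  sub_nonneg.2 (ent_snd_le hp X U)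

lemma ent_comp_le [Fintype 𝒳] [Fintype 𝒰] (hp : ∀ ω, 0 ≤ p ω) (Z : Ω → 𝒳) (h : 𝒳 → 𝒰) :
    ent p (fun ω => h (Z ω)) ≤ ent p Z := by
  have h1 : ent p (fun ω => h (Z ω)) ≤ ent p (fun ω => (Z ω, h (Z ω))) :=
    ent_snd_le hp Z (fun ω => h (Z ω))
  have h2 : ent p (fun ω => (Z ω, h (Z ω))) = ent p Z := by
    have he : Function.Injective (fun z : 𝒳 => (z, h z)) := fun a b hab => congrArg Prod.fst hab
    exact ent_comp_inj hp Z he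
  linarith

lemma marg_id {A : Type} [Fintype A] (m : A → ℝ) (a : A) : marg m (fun x => x) a = m a := by
  unfold marg; simp [Finset.sum_ite_eq]

lemma lsum {A C : Type} [Fintype A] [Fintype C] (m : A → ℝ) (k : A → C) (F : C → ℝ) :
    ∑ x, m x * F (k x) = ∑ c, marg m k c * F c := by
  unfold marg
  have : ∀ c : C, (∑ x, if k x = c then m x else 0) * F c
      = ∑ x, (if k x = c then m x * F c else 0) := by
    intro c
    rw [Finset.sum_mul]
    exact Finset.sum_congr rfl fun x _ => by by_cases h : k x = c <;> simp [h]
  rw [Finset.sum_congr rfl fun c _ => this c, Finset.sum_comm]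
  refine Finset.sum_congr rfl fun x _ => ?_
  simp [Finset.sum_ite_eq]

lemma gibbs {A : Type} [Fintype A] {P Q : A → ℝ} (hP0 : ∀ a, 0 ≤ P a) (hQ0 : ∀ a, 0 ≤ Q a)
    (hPQ : ∀ a, 0 < P a → 0 < Q a) (hQP : ∑ a, Q a ≤ ∑ a, P a) :
    ∑ a, P a * Real.logb 2 (Q a) ≤ ∑ a, P a * Real.logb 2 (P a) := by
  have key : ∀ a, P a * Real.log (Q a) - P a * Real.log (P a) ≤ Q a - P a := by
    intro a
    rcases lt_or_eq_of_le (hP0 a) with h | h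
    · have hQ := hPQ a h
      have hlog : Real.log (Q a / P a) ≤ Q a / P a - 1 :=
        Real.log_le_sub_one_of_pos (div_pos hQ h)
      rw [Real.log_div (ne_of_gt hQ) (ne_of_gt h)] at hlog
      have h2 : P a * (Real.log (Q a) - Real.log (P a)) ≤ P a * (Q a / P a - 1) :=
        mul_le_mul_of_nonneg_left hlog h.le
      have h3 : P a * (Q a / P a - 1) = Q a - P a := by field_simp
      rw [h3] at h2
      linarith [mul_sub (P a) (Real.log (Q a)) (Real.log (P a))]
    · rw [← h]; simpa using hQ0 a
  have hsum : ∑ a, P a * Real.log (Q a) ≤ ∑ a, P a * Real.log (P a) := by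
    have h1 := Finset.sum_le_sum (fun a (_ : a ∈ Finset.univ) => key a)
    rw [Finset.sum_sub_distrib, Finset.sum_sub_distrib] at h1
    linarith
  have hlogb : ∀ (R : A → ℝ), ∑ a, P a * Real.logb 2 (R a)
      = (∑ a, P a * Real.log (R a)) * (Real.log 2)⁻¹ := by
    intro R
    rw [Finset.sum_mul]
    refine Finset.sum_congr rfl fun a _ => ?_
    rw [Real.logb, div_eq_mul_inv, mul_assoc]
  rw [hlogb Q, hlogb P]
  exact mul_le_mul_of_nonneg_right hsum (inv_nonneg.2 (Real.log_nonneg one_le_two))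

lemma ent_marg_comp {A C : Type} [Fintype A] [Fintype C] (X : Ω → A) (k : A → C) :
    ent p (fun ω => k (X ω)) = ent (marg p X) k := by
  unfold ent
  exact Finset.sum_congr rfl fun c _ => by rw [marg_comp]

lemma dataProc_dist {A B C : Type} [Fintype A] [Fintype B] [Fintype C] {m : A × B → ℝ}
    (hm : IsPMF m) (h : A → C) :
    ent m (fun x => h x.1) + ent m (fun x => x) ≤ ent m Prod.fst + ent m (fun x => (h x.1, x.2)) := by
  set mF := marg m Prod.fst with hmF
  set mH := marg m (fun x : A × B => h x.1) with hmH
  set mHU := marg m (fun x : A × B => (h x.1, x.2)) with hmHU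
  have hm0 := hm.1
  have hmF0 : ∀ a, 0 ≤ mF a := marg_nonneg hm0 _
  have hmH0 : ∀ c, 0 ≤ mH c := marg_nonneg hm0 _
  have hmHU0 : ∀ d, 0 ≤ mHU d := marg_nonneg hm0 _
  set Q : A × B → ℝ := fun x => mF x.1 * mHU (h x.1, x.2) * (mH (h x.1))⁻¹ with hQdef
  have hmHfst : ∀ c, ∑ b, mHU (c, b) = mH c := by
    intro c
    rw [← marg_fst_eval]
    exact (marg_comp (p := m) (fun x : A × B => (h x.1, x.2)) Prod.fst c).symm
  have hQ0 : ∀ x, 0 ≤ Q x := fun x =>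
    mul_nonneg (mul_nonneg (hmF0 _) (hmHU0 _)) (inv_nonneg.2 (hmH0 _))
  have hPQ : ∀ x, 0 < m x → 0 < Q x := by
    intro x hx
    have h1 : 0 < mF x.1 := lt_of_lt_of_le hx (le_marg hm0 Prod.fst x)
    have h2 : 0 < mHU (h x.1, x.2) :=
      lt_of_lt_of_le hx (le_marg hm0 (fun x : A × B => (h x.1, x.2)) x)
    have h3 : 0 < mH (h x.1) := lt_of_lt_of_le hx (le_marg hm0 (fun x : A × B => h x.1) x)
    exact mul_pos (mul_pos h1 h2) (inv_pos.2 h3)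
  have hQP : ∑ x, Q x ≤ ∑ x, m x := by
    rw [hm.2, Fintype.sum_prod_type]
    have hinner : ∀ a : A, ∑ b, Q (a, b) ≤ mF a := by
      intro a
      have : ∑ b, Q (a, b) = mF a * (mH (h a) * (mH (h a))⁻¹) := by
        rw [hQdef]
        simp only
        rw [← hmHfst (h a), ← Finset.sum_mul, ← Finset.mul_sum, mul_assoc]
      rw [this]
      rcases eq_or_lt_of_le (hmH0 (h a)) with h0 | h0
      · rw [← h0]; simp [hmF0 a]
      · rw [mul_inv_cancel₀ (ne_of_gt h0), mul_one]
    calc ∑ a, ∑ b, Q (a, b) ≤ ∑ a, mF a := Finset.sum_le_sum fun a _ => hinner a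
      _ = ∑ x, m x := sum_marg Prod.fst
      _ = 1 := hm.2
  have hgibbs := gibbs hm0 hQ0 hPQ hQP
  -- expand logb Q
  have hexp : ∑ x, m x * Real.logb 2 (Q x)
      = (∑ x, m x * Real.logb 2 (mF x.1)) + (∑ x, m x * Real.logb 2 (mHU (h x.1, x.2)))
        - ∑ x, m x * Real.logb 2 (mH (h x.1)) := by
    rw [← Finset.sum_add_distrib, ← Finset.sum_sub_distrib]
    refine Finset.sum_congr rfl fun x _ => ?_
    rcases lt_or_eq_of_le (hm0 x) with hx | hx
    · have h1 : 0 < mF x.1 := lt_of_lt_of_le hx (le_marg hm0 Prod.fst x)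
      have h2 : 0 < mHU (h x.1, x.2) :=
        lt_of_lt_of_le hx (le_marg hm0 (fun x : A × B => (h x.1, x.2)) x)
      have h3 : 0 < mH (h x.1) := lt_of_lt_of_le hx (le_marg hm0 (fun x : A × B => h x.1) x)
      rw [hQdef]
      simp only
      rw [Real.logb_mul (by positivity) (by positivity),
        Real.logb_mul (ne_of_gt h1) (ne_of_gt h2), Real.logb_inv]
      ring
    · rw [← hx]; ring
  rw [hexp] at hgibbs
  have e1 : ∑ x, m x * Real.logb 2 (mF x.1) = ∑ a, mF a * Real.logb 2 (mF a) :=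
    lsum m Prod.fst (fun c => Real.logb 2 (mF c))
  have e2 : ∑ x, m x * Real.logb 2 (mHU (h x.1, x.2)) = ∑ d, mHU d * Real.logb 2 (mHU d) :=
    lsum m (fun x : A × B => (h x.1, x.2)) (fun d => Real.logb 2 (mHU d))
  have e3 : ∑ x, m x * Real.logb 2 (mH (h x.1)) = ∑ c, mH c * Real.logb 2 (mH c) :=
    lsum m (fun x : A × B => h x.1) (fun c => Real.logb 2 (mH c))
  rw [e1, e2, e3] at hgibbs
  have hent : ∀ {D : Type} [Fintype D] (k : A × B → D),
      ent m k = -∑ d, marg m k d * Real.logb 2 (marg m k d) := by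
    intro D _ k
    unfold ent
    rw [← Finset.sum_neg_distrib]
  have hid : ent m (fun x => x) = -∑ x, m x * Real.logb 2 (m x) := by
    rw [hent (fun x => x)]
    congr 1
    exact Finset.sum_congr rfl fun x _ => by rw [marg_id]
  rw [hent Prod.fst, hent (fun x : A × B => h x.1), hent (fun x : A × B => (h x.1, x.2)), hid]
  linarith

lemma mutInfo_comp_le [Fintype 𝒳] [Fintype 𝒰] [Fintype 𝒱] (hp : IsPMF p)
    (Z : Ω → 𝒳) (U : Ω → 𝒰) (h : 𝒳 → 𝒱) :
    mutInfo p (fun ω => h (Z ω)) U ≤ mutInfo p Z U := by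
  set m := marg p (fun ω => (Z ω, U ω)) with hm
  have hmP : IsPMF m := isPMF_marg hp _
  have e0 : ent p (fun ω => (Z ω, U ω)) = ent m (fun x => x) :=
    ent_marg_comp (fun ω => (Z ω, U ω)) (fun x => x)
  have e1 : ent p Z = ent m Prod.fst :=
    ent_marg_comp (fun ω => (Z ω, U ω)) Prod.fst
  have e3 : ent p (fun ω => h (Z ω)) = ent m (fun x : 𝒳 × 𝒰 => h x.1) :=
    ent_marg_comp (fun ω => (Z ω, U ω)) (fun x => h x.1)
  have e4 : ent p (fun ω => (h (Z ω), U ω)) = ent m (fun x : 𝒳 × 𝒰 => (h x.1, x.2)) :=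
    ent_marg_comp (fun ω => (Z ω, U ω)) (fun x => (h x.1, x.2))
  have hdp := dataProc_dist hmP h
  simp only [mutInfo]
  rw [e3, e4, e1, e0]
  linarith

end Lemmas

section Common
variable {𝒳 𝒴 : Type} [Fintype 𝒳] [Fintype 𝒴]

/-- Base relation on `𝒳`: sharing a `y` with positive joint probability. -/
def Rel (p : 𝒳 × 𝒴 → ℝ) (x x' : 𝒳) : Prop := ∃ y, 0 < p (x, y) ∧ 0 < p (x', y)

def cpSetoid (p : 𝒳 × 𝒴 → ℝ) : Setoid 𝒳 := Relation.EqvGen.setoid (Rel p)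

/-- The type of "common part" values: connected components. -/
def CP (p : 𝒳 × 𝒴 → ℝ) : Type := Quotient (cpSetoid p)

noncomputable instance (p : 𝒳 × 𝒴 → ℝ) : Fintype (CP p) := Quotient.fintype _

def fstar (p : 𝒳 × 𝒴 → ℝ) : 𝒳 → CP p := fun x => Quotient.mk (cpSetoid p) x

lemma fstar_eq_of_rel {p : 𝒳 × 𝒴 → ℝ} {x x' : 𝒳} (h : Rel p x x') :
    fstar p x = fstar p x' := Quot.sound (Relation.EqvGen.rel _ _ h)

def gstar (p : 𝒳 × 𝒴 → ℝ) (x₀ : 𝒳) : 𝒴 → CP p := fun y =>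
  if h : ∃ x, 0 < p (x, y) then fstar p h.choose else fstar p x₀

lemma gstar_spec (p : 𝒳 × 𝒴 → ℝ) (x₀ : 𝒳) {x : 𝒳} {y : 𝒴} (h : 0 < p (x, y)) :
    fstar p x = gstar p x₀ y := by
  unfold gstar
  rw [dif_pos ⟨x, h⟩]
  exact fstar_eq_of_rel ⟨y, h, (⟨x, h⟩ : ∃ x, 0 < p (x, y)).choose_spec⟩

lemma eqvGen_lift {p : 𝒳 × 𝒴 → ℝ} {𝒱 : Type} (f : 𝒳 → 𝒱)
    (hf : ∀ x x', Rel p x x' → f x = f x') :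
    ∀ a b, Relation.EqvGen (Rel p) a b → f a = f b := by
  intro a b h
  induction h with
  | rel x y hxy => exact hf x y hxy
  | refl x => rfl
  | symm x y _ ih => exact ih.symm
  | trans x y z _ _ ih1 ih2 => exact ih1.trans ih2

lemma fstar_factor {p : 𝒳 × 𝒴 → ℝ} {𝒱 : Type} (f : 𝒳 → 𝒱)
    (hf : ∀ x x', Rel p x x' → f x = f x') :
    ∃ φ : CP p → 𝒱, ∀ x, f x = φ (fstar p x) :=
  ⟨Quotient.lift f (eqvGen_lift f hf), fun _ => rfl⟩

end Common

set_option maxHeartbeats 2000000 in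
/-- The Gács–Körner common information equals the infimum of `I(X,Y;U)`
over all finite-alphabet auxiliary random variables `U` jointly distributed with `(X,Y)`
such that the conditional Gács–Körner common information `C_GK(X;Y|U)` vanishes. -/
theorem gacsKorner_eq_inf_mutInfo {𝒳 𝒴 : Type} [Fintype 𝒳] [Fintype 𝒴]
    (p : 𝒳 × 𝒴 → ℝ) (hp : IsPMF p) :
    CGK p Prod.fst Prod.snd =
      sInf { r | ∃ (𝒰 : FinAlph) (q : (𝒳 × 𝒴) × 𝒰 → ℝ),
        IsPMF q ∧ (∀ a, marg q Prod.fst a = p a) ∧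
        CGKcond q (fun a => a.1.1) (fun a => a.1.2) Prod.snd = 0 ∧
        r = mutInfo q Prod.fst Prod.snd } := by
  classical
  -- a point of positive probability
  have hpos : ∃ a : 𝒳 × 𝒴, 0 < p a := by
    by_contra hc
    push_neg at hc
    have h0 : ∑ a, p a = 0 :=
      Finset.sum_eq_zero fun a _ => le_antisymm (hc a) (hp.1 a)
    rw [hp.2] at h0
    norm_num at h0
  obtain ⟨a₀, ha₀⟩ := hpos
  -- Step A : CGK = entropy of the common part
  have hCGK : CGK p Prod.fst Prod.snd = ent p (fun ω : 𝒳 × 𝒴 => fstar p ω.1) := by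
    refine IsGreatest.csSup_eq ⟨?_, ?_⟩
    · exact ⟨⟨CP p⟩, fstar p, gstar p a₀.1,
        fun ω hω => gstar_spec p a₀.1 hω, rfl⟩
    · rintro r ⟨𝒱, f, g, hae, rfl⟩
      have hf : ∀ x x', Rel p x x' → f x = f x' := by
        rintro x x' ⟨y, h1, h2⟩
        exact (hae (x, y) h1).trans (hae (x', y) h2).symm
      obtain ⟨φ, hφ⟩ := fstar_factor f hf
      have hrw : (fun ω : 𝒳 × 𝒴 => f (Prod.fst ω)) = fun ω => φ (fstar p ω.1) :=
        funext fun ω => hφ _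
      rw [hrw]
      exact ent_comp_le hp.1 (fun ω : 𝒳 × 𝒴 => fstar p ω.1) φ
  -- Step B : the canonical auxiliary variable q0
  set q0 : (𝒳 × 𝒴) × CP p → ℝ := fun a => if a.2 = fstar p a.1.1 then p a.1 else 0 with hq0def
  have hq00 : ∀ a, 0 ≤ q0 a := fun a => by
    by_cases h : a.2 = fstar p a.1.1 <;> simp [hq0def, h, hp.1 _]
  have hq0pos : ∀ a, 0 < q0 a → a.2 = fstar p a.1.1 ∧ 0 < p a.1 := by
    intro a ha
    by_cases h : a.2 = fstar p a.1.1
    · refine ⟨h, ?_⟩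
      rw [hq0def] at ha
      simpa [h] using ha
    · rw [hq0def] at ha
      simp [h] at ha
  have hq0marg : ∀ a, marg q0 Prod.fst a = p a := by
    intro a
    rw [marg_fst_eval]
    simp [hq0def, Finset.sum_ite_eq]
  have hq0pmf : IsPMF q0 := by
    refine ⟨hq00, ?_⟩
    rw [← sum_marg Prod.fst, Finset.sum_congr rfl fun a _ => hq0marg a]
    exact hp.2
  have hsnd : ent q0 Prod.snd = ent p (fun ω : 𝒳 × 𝒴 => fstar p ω.1) := by
    have h1 : ent q0 Prod.snd = ent q0 (fun a => fstar p a.1.1) :=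
      ent_congr hq00 fun a ha => (hq0pos a ha).1
    have h2 : ent q0 (fun a => fstar p a.1.1)
        = ent (marg q0 Prod.fst) (fun xy : 𝒳 × 𝒴 => fstar p xy.1) :=
      ent_marg_comp Prod.fst (fun xy : 𝒳 × 𝒴 => fstar p xy.1)
    rw [h1, h2, funext hq0marg]
  have hMI0 : mutInfo q0 Prod.fst Prod.snd = ent p (fun ω : 𝒳 × 𝒴 => fstar p ω.1) := by
    have hids : ent q0 (fun a => (Prod.fst a, Prod.snd a)) = ent q0 Prod.fst := by
      have hae2 : AEEq q0 (fun a => (Prod.fst a, Prod.snd a))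
          (fun a => (a.1, fstar p a.1.1)) := by
        intro a ha
        have := (hq0pos a ha).1
        simp [this]
      have h4 : ent q0 (fun a => (a.1, fstar p a.1.1)) = ent q0 Prod.fst :=
        ent_comp_inj hq00 Prod.fst
          (e := fun x : 𝒳 × 𝒴 => (x, fstar p x.1))
          (fun a b hab => congrArg Prod.fst hab)
      rw [ent_congr hq00 hae2, h4]
    simp only [mutInfo]
    rw [hids, hsnd]
    ring
  -- Step B' : conditional GK common information of q0 vanishes
  have hcond0 : CGKcond q0 (fun a => a.1.1) (fun a => a.1.2) Prod.snd = 0 := by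
    have hallzero : ∀ r ∈ { r | ∃ (𝒱 : FinAlph) (f : 𝒳 × CP p → 𝒱) (g : 𝒴 × CP p → 𝒱),
        AEEq q0 (fun ω => f (ω.1.1, ω.2)) (fun ω => g (ω.1.2, ω.2)) ∧
        r = condEnt q0 (fun ω => f (ω.1.1, ω.2)) Prod.snd }, r = 0 := by
      rintro r ⟨𝒱, f, g, hae, rfl⟩
      have hchain : ∀ a b, Relation.EqvGen (Rel p) a b →
          f (a, fstar p a) = f (b, fstar p b) := by
        intro a b h
        induction h with
        | rel x y hxy =>
          obtain ⟨yy, h1, h2⟩ := hxy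
          have hfs : fstar p x = fstar p y := fstar_eq_of_rel ⟨yy, h1, h2⟩
          have e1 : f (x, fstar p x) = g (yy, fstar p x) := by
            refine hae ((x, yy), fstar p x) ?_
            rw [hq0def]
            simpa using h1
          have e2 : f (y, fstar p y) = g (yy, fstar p y) := by
            refine hae ((y, yy), fstar p y) ?_
            rw [hq0def]
            simpa using h2
          rw [e1, e2, hfs]
        | refl x => rfl
        | symm x y _ ih => exact ih.symm
        | trans x y z _ _ ih1 ih2 => exact ih1.trans ih2
      have haeψ : AEEq q0 (fun ω => f (ω.1.1, ω.2))
          (fun ω => Quotient.lift (fun x => f (x, fstar p x)) hchain ω.2) := by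
        intro ω hω
        obtain ⟨h1, -⟩ := hq0pos ω hω
        beta_reduce
        rw [h1]
        rfl
      have hpair : ent q0 (fun ω => (f (ω.1.1, ω.2), Prod.snd ω)) = ent q0 Prod.snd := by
        have hae3 : AEEq q0 (fun ω => (f (ω.1.1, ω.2), Prod.snd ω))
            (fun ω => (Quotient.lift (fun x => f (x, fstar p x)) hchain (Prod.snd ω),
              Prod.snd ω)) := by
          intro ω hω
          have hh := haeψ ω hω
          beta_reduce at hh ⊢
          rw [hh]
        have h5 : ent q0 (fun ω => (Quotient.lift (fun x => f (x, fstar p x)) hchain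
            (Prod.snd ω), Prod.snd ω)) = ent q0 Prod.snd :=
          ent_comp_inj hq00 Prod.snd
            (e := fun v => (Quotient.lift (fun x => f (x, fstar p x)) hchain v, v))
            (fun a b hab => congrArg Prod.snd hab)
        rw [ent_congr hq00 hae3, h5]
      simp only [condEnt]
      rw [hpair, sub_self]
    have hw : condEnt q0 (fun ω : (𝒳 × 𝒴) × CP p => PUnit.unit) Prod.snd ∈
        { r | ∃ (𝒱 : FinAlph) (f : 𝒳 × CP p → 𝒱) (g : 𝒴 × CP p → 𝒱),
        AEEq q0 (fun ω => f (ω.1.1, ω.2)) (fun ω => g (ω.1.2, ω.2)) ∧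
        r = condEnt q0 (fun ω => f (ω.1.1, ω.2)) Prod.snd } :=
      ⟨⟨PUnit⟩, fun _ => PUnit.unit, fun _ => PUnit.unit, fun ω _ => rfl, rfl⟩
    refine le_antisymm (csSup_le ⟨_, hw⟩ fun r hr => (hallzero r hr).le) ?_
    have h0mem := hallzero _ hw ▸ hw
    exact le_csSup ⟨0, fun r hr => (hallzero r hr).le⟩ h0mem
  -- membership of the canonical construction in the RHS set
  have hmem : ent p (fun ω : 𝒳 × 𝒴 => fstar p ω.1) ∈
      { r | ∃ (𝒰 : FinAlph) (q : (𝒳 × 𝒴) × 𝒰 → ℝ),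
        IsPMF q ∧ (∀ a, marg q Prod.fst a = p a) ∧
        CGKcond q (fun a => a.1.1) (fun a => a.1.2) Prod.snd = 0 ∧
        r = mutInfo q Prod.fst Prod.snd } :=
    ⟨⟨CP p⟩, q0, hq0pmf, hq0marg, hcond0, hMI0.symm⟩
  -- Step C : lower bound
  have hlb : ∀ r ∈ { r | ∃ (𝒰 : FinAlph) (q : (𝒳 × 𝒴) × 𝒰 → ℝ),
      IsPMF q ∧ (∀ a, marg q Prod.fst a = p a) ∧
      CGKcond q (fun a => a.1.1) (fun a => a.1.2) Prod.snd = 0 ∧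
      r = mutInfo q Prod.fst Prod.snd },
      ent p (fun ω : 𝒳 × 𝒴 => fstar p ω.1) ≤ r := by
    rintro r ⟨𝒰, q, hq, hmarg, hcond, rfl⟩
    have hqp : ∀ a : (𝒳 × 𝒴) × 𝒰, 0 < q a → 0 < p a.1 := by
      intro a ha
      have h1 : q a ≤ marg q Prod.fst a.1 := le_marg hq.1 Prod.fst a
      rw [hmarg a.1] at h1
      exact lt_of_lt_of_le ha h1
    have hWmem : condEnt q (fun ω => fstar p ω.1.1) Prod.snd ∈
        { r | ∃ (𝒱 : FinAlph) (f : 𝒳 × 𝒰 → 𝒱) (g : 𝒴 × 𝒰 → 𝒱),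
          AEEq q (fun ω => f (ω.1.1, ω.2)) (fun ω => g (ω.1.2, ω.2)) ∧
          r = condEnt q (fun ω => f (ω.1.1, ω.2)) Prod.snd } :=
      ⟨⟨CP p⟩, fun xu => fstar p xu.1, fun yu => gstar p a₀.1 yu.1,
        fun ω hω => gstar_spec p a₀.1 (hqp ω hω), rfl⟩
    have hbdd : BddAbove { r | ∃ (𝒱 : FinAlph) (f : 𝒳 × 𝒰 → 𝒱) (g : 𝒴 × 𝒰 → 𝒱),
        AEEq q (fun ω => f (ω.1.1, ω.2)) (fun ω => g (ω.1.2, ω.2)) ∧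
        r = condEnt q (fun ω => f (ω.1.1, ω.2)) Prod.snd } := by
      refine ⟨ent q (fun ω => ω) - ent q Prod.snd, ?_⟩
      rintro r ⟨𝒱, f, g, hae, rfl⟩
      have hle : ent q (fun ω => (f (ω.1.1, ω.2), Prod.snd ω)) ≤ ent q (fun ω => ω) :=
        ent_comp_le hq.1 (fun ω => ω)
          (fun a : (𝒳 × 𝒴) × 𝒰 => ((f (a.1.1, a.2), Prod.snd a) : 𝒱 × 𝒰))
      simp only [condEnt]
      exact sub_le_sub_right hle _
    have hWz : condEnt q (fun ω => fstar p ω.1.1) Prod.snd = 0 := by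
      refine le_antisymm ?_ (condEnt_nonneg hq.1 _ _)
      have := le_csSup hbdd hWmem
      calc condEnt q (fun ω => fstar p ω.1.1) Prod.snd
          ≤ CGKcond q (fun a => a.1.1) (fun a => a.1.2) Prod.snd := this
        _ = 0 := hcond
    have hdp : mutInfo q (fun ω => fstar p ω.1.1) Prod.snd ≤ mutInfo q Prod.fst Prod.snd :=
      mutInfo_comp_le hq Prod.fst Prod.snd (fun xy : 𝒳 × 𝒴 => fstar p xy.1)
    have hent_pair : mutInfo q (fun ω => fstar p ω.1.1) Prod.snd
        = ent q (fun ω => fstar p ω.1.1) - condEnt q (fun ω => fstar p ω.1.1) Prod.snd := by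
      simp only [mutInfo, condEnt]
      ring
    have hentW : ent q (fun ω => fstar p ω.1.1) = ent p (fun ω : 𝒳 × 𝒴 => fstar p ω.1) := by
      have h6 : ent q (fun ω => fstar p ω.1.1)
          = ent (marg q Prod.fst) (fun xy : 𝒳 × 𝒴 => fstar p xy.1) :=
        ent_marg_comp Prod.fst (fun xy : 𝒳 × 𝒴 => fstar p xy.1)
      rw [h6, funext hmarg]
    linarith
  rw [hCGK]
  exact le_antisymm (le_csInf ⟨_, hmem⟩ hlb)
    (csInf_le ⟨ent p (fun ω : 𝒳 × 𝒴 => fstar p ω.1), hlb⟩ hmem)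


end GCI
end
end

section
/- Fix a finite alphabet 𝒰 and a conditional distribution P_{XY|U} from 𝒰 to a finite alphabet 𝒳×𝒴. Then the map P_U ↦ ρ_m(X;Y|U), sending a pmf P_U on 𝒰 to the conditional maximal correlation of X and Y given U under the joint law P_U·P_{XY|U}, is concave. In fact, for any pmfs P_U, Q_U on 𝒰 and λ ∈ (0,1), the conditional maximal correlation under the mixture λP_U + (1−λ)Q_U equals the maximum of the conditional maximal correlations under P_U and under Q_U. -/
open scoped BigOperators Classical

noncomputable section

namespace GCI

variable {Ω : Type} [Fintype Ω]

/-- The joint pmf on `(𝒳 × 𝒴) × 𝒰` determined by a pmf `pU` on `𝒰`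
and a conditional distribution `W` from `𝒰` to `𝒳 × 𝒴`. -/
def jointOf {𝒳 𝒴 𝒰 : Type} (pU : 𝒰 → ℝ) (W : 𝒰 → 𝒳 × 𝒴 → ℝ) :
    (𝒳 × 𝒴) × 𝒰 → ℝ :=
  fun a => pU a.2 * W a.2 a.1

set_option linter.unusedSectionVars false

/-! ### Auxiliary definitions -/

variable {𝒳 𝒴 𝒰 : Type} [Fintype 𝒳] [Fintype 𝒴] [Fintype 𝒰]

/-- Conditional mean of `F` given `U = u`, computed from the kernel `W`. -/
def mW (W : 𝒰 → 𝒳 × 𝒴 → ℝ) (F : (𝒳 × 𝒴) × 𝒰 → ℝ) (u : 𝒰) : ℝ :=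
  ∑ a, W u a * F (a, u)

/-- Conditional covariance of `F, G` given `U = u`, computed from the kernel `W`. -/
def ccW (W : 𝒰 → 𝒳 × 𝒴 → ℝ) (F G : (𝒳 × 𝒴) × 𝒰 → ℝ) (u : 𝒰) : ℝ :=
  ∑ a, W u a * ((F (a, u) - mW W F u) * (G (a, u) - mW W G u))

lemma marg_jointOf (W : 𝒰 → 𝒳 × 𝒴 → ℝ) (hW1 : ∀ u, ∑ a, W u a = 1)
    (pU : 𝒰 → ℝ) (u : 𝒰) : marg (jointOf pU W) Prod.snd u = pU u := by
  unfold marg jointOf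
  rw [Fintype.sum_prod_type]
  simp only [Finset.sum_ite_eq' Finset.univ u, Finset.mem_univ, if_true]
  rw [← Finset.mul_sum, hW1 u, mul_one]

lemma cexp_jointOf (W : 𝒰 → 𝒳 × 𝒴 → ℝ) (hW1 : ∀ u, ∑ a, W u a = 1)
    (pU : 𝒰 → ℝ) (u : 𝒰) (F : (𝒳 × 𝒴) × 𝒰 → ℝ) :
    cexp (jointOf pU W) Prod.snd u F = if pU u = 0 then 0 else mW W F u := by
  unfold cexp
  rw [marg_jointOf W hW1]
  have hnum : (∑ ω, if Prod.snd ω = u then jointOf pU W ω * F ω else 0)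
      = pU u * mW W F u := by
    unfold jointOf mW
    rw [Fintype.sum_prod_type]
    simp only [Finset.sum_ite_eq' Finset.univ u, Finset.mem_univ, if_true]
    rw [Finset.mul_sum]
    exact Finset.sum_congr rfl fun a _ => by ring
  rw [hnum]
  by_cases h : pU u = 0
  · simp [h]
  · rw [if_neg h]
    field_simp

lemma ccov_jointOf (W : 𝒰 → 𝒳 × 𝒴 → ℝ) (hW1 : ∀ u, ∑ a, W u a = 1)
    (pU : 𝒰 → ℝ) (F G : (𝒳 × 𝒴) × 𝒰 → ℝ) :
    ccov (jointOf pU W) Prod.snd F G = ∑ u, pU u * ccW W F G u := by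
  unfold ccov expec
  rw [Fintype.sum_prod_type, Finset.sum_comm]
  refine Finset.sum_congr rfl fun u _ => ?_
  by_cases h : pU u = 0
  · simp [jointOf, h]
  · rw [ccW, Finset.mul_sum]
    refine Finset.sum_congr rfl fun a _ => ?_
    have h1 : cexp (jointOf pU W) Prod.snd u F = mW W F u := by
      rw [cexp_jointOf W hW1, if_neg h]
    have h2 : cexp (jointOf pU W) Prod.snd u G = mW W G u := by
      rw [cexp_jointOf W hW1, if_neg h]
    simp only [jointOf, h1, h2]
    ring

/-! ### Cauchy–Schwarz tools -/

lemma wcs {ι : Type*} [Fintype ι] (w φ ψ : ι → ℝ) (hw : ∀ i, 0 ≤ w i) :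
    ∑ i, w i * (φ i * ψ i) ≤
      Real.sqrt (∑ i, w i * φ i ^ 2) * Real.sqrt (∑ i, w i * ψ i ^ 2) := by
  have h := Real.sum_mul_le_sqrt_mul_sqrt Finset.univ
    (fun i => Real.sqrt (w i) * φ i) (fun i => Real.sqrt (w i) * ψ i)
  have e1 : ∀ i, Real.sqrt (w i) * φ i * (Real.sqrt (w i) * ψ i) = w i * (φ i * ψ i) := by
    intro i
    rw [mul_mul_mul_comm, Real.mul_self_sqrt (hw i)]
  have e2 : ∀ i, (Real.sqrt (w i) * φ i) ^ 2 = w i * φ i ^ 2 := by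
    intro i; rw [mul_pow, Real.sq_sqrt (hw i)]
  have e3 : ∀ i, (Real.sqrt (w i) * ψ i) ^ 2 = w i * ψ i ^ 2 := by
    intro i; rw [mul_pow, Real.sq_sqrt (hw i)]
  simp only [e1, e2, e3] at h
  exact h

lemma ccW_self_nonneg (W : 𝒰 → 𝒳 × 𝒴 → ℝ) (hW0 : ∀ u a, 0 ≤ W u a)
    (F : (𝒳 × 𝒴) × 𝒰 → ℝ) (u : 𝒰) : 0 ≤ ccW W F F u :=
  Finset.sum_nonneg fun a _ => mul_nonneg (hW0 u a) (mul_self_nonneg _)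

lemma ccW_le (W : 𝒰 → 𝒳 × 𝒴 → ℝ) (hW0 : ∀ u a, 0 ≤ W u a)
    (F G : (𝒳 × 𝒴) × 𝒰 → ℝ) (u : 𝒰) :
    ccW W F G u ≤ Real.sqrt (ccW W F F u) * Real.sqrt (ccW W G G u) := by
  have h := wcs (fun a => W u a) (fun a => F (a, u) - mW W F u)
    (fun a => G (a, u) - mW W G u) (fun a => hW0 u a)
  calc ccW W F G u ≤ _ := h
    _ = _ := by
        unfold ccW
        congr 2 <;> exact Finset.sum_congr rfl fun a _ => by ring

/-- Weighted sum version: `∑ pU u * ccW F G u ≤ √(cvar F) * √(cvar G)`. -/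
lemma sum_ccW_le (W : 𝒰 → 𝒳 × 𝒴 → ℝ) (hW0 : ∀ u a, 0 ≤ W u a)
    (pU : 𝒰 → ℝ) (hp : ∀ u, 0 ≤ pU u) (F G : (𝒳 × 𝒴) × 𝒰 → ℝ) :
    ∑ u, pU u * ccW W F G u ≤
      Real.sqrt (∑ u, pU u * ccW W F F u) * Real.sqrt (∑ u, pU u * ccW W G G u) := by
  have step1 : ∑ u, pU u * ccW W F G u ≤
      ∑ u, pU u * (Real.sqrt (ccW W F F u) * Real.sqrt (ccW W G G u)) :=
    Finset.sum_le_sum fun u _ =>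
      mul_le_mul_of_nonneg_left (ccW_le W hW0 F G u) (hp u)
  have step2 := wcs pU (fun u => Real.sqrt (ccW W F F u))
    (fun u => Real.sqrt (ccW W G G u)) hp
  simp only [Real.sq_sqrt (ccW_self_nonneg W hW0 F _), Real.sq_sqrt (ccW_self_nonneg W hW0 G _)]
    at step2
  exact step1.trans step2

/-- Two-point Cauchy–Schwarz. -/
lemma two_cs (a b c d l : ℝ) (ha : 0 ≤ a) (hb : 0 ≤ b) (hc : 0 ≤ c) (hd : 0 ≤ d)
    (hl : 0 ≤ l) (hl1 : l ≤ 1) :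
    l * (Real.sqrt a * Real.sqrt b) + (1 - l) * (Real.sqrt c * Real.sqrt d) ≤
      Real.sqrt (l * a + (1 - l) * c) * Real.sqrt (l * b + (1 - l) * d) := by
  have h := wcs (ι := Bool) (fun i => if i then l else 1 - l)
    (fun i => if i then Real.sqrt a else Real.sqrt c)
    (fun i => if i then Real.sqrt b else Real.sqrt d)
    (by intro i; cases i <;> simp <;> linarith)
  simp only [Fintype.sum_bool, Bool.false_eq_true, if_true, if_false] at h
  rw [Real.sq_sqrt ha, Real.sq_sqrt hb, Real.sq_sqrt hc, Real.sq_sqrt hd] at h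
  exact h

lemma wcs_sq {ι : Type*} [Fintype ι] (w φ ψ : ι → ℝ) (hw : ∀ i, 0 ≤ w i) :
    (∑ i, w i * (φ i * ψ i)) ^ 2 ≤ (∑ i, w i * φ i ^ 2) * (∑ i, w i * ψ i ^ 2) := by
  have h := Finset.sum_mul_sq_le_sq_mul_sq Finset.univ
    (fun i => Real.sqrt (w i) * φ i) (fun i => Real.sqrt (w i) * ψ i)
  have e1 : ∀ i, Real.sqrt (w i) * φ i * (Real.sqrt (w i) * ψ i) = w i * (φ i * ψ i) := by
    intro i; rw [mul_mul_mul_comm, Real.mul_self_sqrt (hw i)]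
  have e2 : ∀ i, (Real.sqrt (w i) * φ i) ^ 2 = w i * φ i ^ 2 := by
    intro i; rw [mul_pow, Real.sq_sqrt (hw i)]
  have e3 : ∀ i, (Real.sqrt (w i) * ψ i) ^ 2 = w i * ψ i ^ 2 := by
    intro i; rw [mul_pow, Real.sq_sqrt (hw i)]
  simp only [e1, e2, e3] at h
  exact h

lemma pos_pos_of_mul_pos {a b : ℝ} (ha : 0 ≤ a) (hb : 0 ≤ b) (h : 0 < a * b) :
    0 < a ∧ 0 < b := by
  constructor <;> nlinarith

/-! ### The conditional maximal correlation as a function of `pU` -/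

/-- `ρ_m(X;Y|U)` under `pU · W`. -/
def rho (W : 𝒰 → 𝒳 × 𝒴 → ℝ) (pU : 𝒰 → ℝ) : ℝ :=
  maxCorr (jointOf pU W) Prod.snd (fun a => a.1.1) (fun a => a.1.2)

def FX (f : 𝒳 × 𝒰 → ℝ) : (𝒳 × 𝒴) × 𝒰 → ℝ := fun ω => f (ω.1.1, ω.2)
def GY {𝒳 : Type} (g : 𝒴 × 𝒰 → ℝ) : (𝒳 × 𝒴) × 𝒰 → ℝ := fun ω => g (ω.1.2, ω.2)

lemma rho_def (W : 𝒰 → 𝒳 × 𝒴 → ℝ) (pU : 𝒰 → ℝ) :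
    rho W pU = ⨆ f : 𝒳 × 𝒰 → ℝ, ⨆ g : 𝒴 × 𝒰 → ℝ,
      ccorr (jointOf pU W) Prod.snd (FX f) (GY g) := rfl

section Main

variable (W : 𝒰 → 𝒳 × 𝒴 → ℝ) (hW0 : ∀ u a, 0 ≤ W u a) (hW1 : ∀ u, ∑ a, W u a = 1)

include hW0 hW1

lemma sum_ccW_self_nonneg (pU : 𝒰 → ℝ) (hp : ∀ u, 0 ≤ pU u) (F : (𝒳 × 𝒴) × 𝒰 → ℝ) :
    0 ≤ ∑ u, pU u * ccW W F F u :=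
  Finset.sum_nonneg fun u _ => mul_nonneg (hp u) (ccW_self_nonneg W hW0 F u)

lemma ccorr_joint_le_one (pU : 𝒰 → ℝ) (hp : ∀ u, 0 ≤ pU u) (F G : (𝒳 × 𝒴) × 𝒰 → ℝ) :
    ccorr (jointOf pU W) Prod.snd F G ≤ 1 := by
  unfold ccorr
  split_ifs with h
  · have hVF : cvar (jointOf pU W) Prod.snd F = ∑ u, pU u * ccW W F F u :=
      ccov_jointOf W hW1 pU F F
    have hVG : cvar (jointOf pU W) Prod.snd G = ∑ u, pU u * ccW W G G u :=
      ccov_jointOf W hW1 pU G G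
    rw [hVF, hVG] at h ⊢
    rw [ccov_jointOf W hW1]
    obtain ⟨hA, hB⟩ := pos_pos_of_mul_pos (sum_ccW_self_nonneg W hW0 hW1 pU hp F)
      (sum_ccW_self_nonneg W hW0 hW1 pU hp G) h
    rw [div_le_one (by positivity)]
    exact sum_ccW_le W hW0 pU hp F G
  · exact zero_le_one

lemma bdd_g (pU : 𝒰 → ℝ) (hp : ∀ u, 0 ≤ pU u) (f : 𝒳 × 𝒰 → ℝ) :
    BddAbove (Set.range fun g : 𝒴 × 𝒰 → ℝ =>
      ccorr (jointOf pU W) Prod.snd (FX f) (GY g)) := by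
  refine ⟨1, ?_⟩
  rintro x ⟨g, rfl⟩
  exact ccorr_joint_le_one W hW0 hW1 pU hp _ _

lemma bdd_f (pU : 𝒰 → ℝ) (hp : ∀ u, 0 ≤ pU u) :
    BddAbove (Set.range fun f : 𝒳 × 𝒰 → ℝ => ⨆ g : 𝒴 × 𝒰 → ℝ,
      ccorr (jointOf pU W) Prod.snd (FX f) (GY g)) := by
  refine ⟨1, ?_⟩
  rintro x ⟨f, rfl⟩
  exact ciSup_le fun g => ccorr_joint_le_one W hW0 hW1 pU hp _ _

lemma ccorr_le_rho (pU : 𝒰 → ℝ) (hp : ∀ u, 0 ≤ pU u) (f : 𝒳 × 𝒰 → ℝ) (g : 𝒴 × 𝒰 → ℝ) :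
    ccorr (jointOf pU W) Prod.snd (FX f) (GY g) ≤ rho W pU := by
  rw [rho_def]
  exact le_trans (le_ciSup (bdd_g W hW0 hW1 pU hp f) g) (le_ciSup (bdd_f W hW0 hW1 pU hp) f)

lemma rho_nonneg (pU : 𝒰 → ℝ) (hp : ∀ u, 0 ≤ pU u) : 0 ≤ rho W pU := by
  have hzero : ccorr (jointOf pU W) Prod.snd (FX (fun _ => 0)) (GY (𝒳 := 𝒳) (fun _ => 0))
      = 0 := by
    have hv : cvar (jointOf pU W) Prod.snd (FX (fun _ => (0 : ℝ))) = 0 := by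
      rw [cvar, ccov_jointOf W hW1]
      simp [ccW, mW, FX]
    unfold ccorr
    rw [hv]
    simp
  calc (0 : ℝ) = _ := hzero.symm
    _ ≤ rho W pU := ccorr_le_rho W hW0 hW1 pU hp _ _

/-- Localization of `F` at `u0`: centered at `u0`, zero elsewhere. -/
def loc (W : 𝒰 → 𝒳 × 𝒴 → ℝ) (F : (𝒳 × 𝒴) × 𝒰 → ℝ) (u0 : 𝒰) : (𝒳 × 𝒴) × 𝒰 → ℝ :=
  fun ω => if ω.2 = u0 then F (ω.1, u0) - mW W F u0 else 0

lemma mW_loc (F : (𝒳 × 𝒴) × 𝒰 → ℝ) (u0 u : 𝒰) : mW W (loc W F u0) u = 0 := by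
  by_cases hu : u = u0
  · subst hu
    unfold mW loc
    simp only [eq_self_iff_true, if_true, ite_true]
    have : ∀ a : 𝒳 × 𝒴, W u a * (F (a, u) - mW W F u)
        = W u a * F (a, u) - W u a * mW W F u := fun a => by ring
    rw [Finset.sum_congr rfl fun a _ => this a, Finset.sum_sub_distrib,
      ← Finset.sum_mul, hW1 u, one_mul]
    exact sub_self _
  · unfold mW loc
    simp [hu]

lemma ccW_loc (F G : (𝒳 × 𝒴) × 𝒰 → ℝ) (u0 u : 𝒰) :
    ccW W (loc W F u0) (loc W G u0) u = if u = u0 then ccW W F G u0 else 0 := by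
  by_cases hu : u = u0
  · subst hu
    rw [if_pos rfl]
    unfold ccW
    rw [mW_loc W hW0 hW1, mW_loc W hW0 hW1]
    refine Finset.sum_congr rfl fun a _ => ?_
    unfold loc
    simp only [eq_self_iff_true, if_true, ite_true, sub_zero]
  · rw [if_neg hu]
    unfold ccW
    rw [mW_loc W hW0 hW1, mW_loc W hW0 hW1]
    refine Finset.sum_eq_zero fun a _ => ?_
    unfold loc
    simp [hu]

lemma ccW_sq_le (F G : (𝒳 × 𝒴) × 𝒰 → ℝ) (u0 : 𝒰) :
    (ccW W F G u0) ^ 2 ≤ ccW W F F u0 * ccW W G G u0 := by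
  have h := wcs_sq (fun a => W u0 a) (fun a => F (a, u0) - mW W F u0)
    (fun a => G (a, u0) - mW W G u0) (fun a => hW0 u0 a)
  have eF : ccW W F F u0 = ∑ a, W u0 a * (F (a, u0) - mW W F u0) ^ 2 :=
    Finset.sum_congr rfl fun a _ => by ring
  have eG : ccW W G G u0 = ∑ a, W u0 a * (G (a, u0) - mW W G u0) ^ 2 :=
    Finset.sum_congr rfl fun a _ => by ring
  rw [eF, eG]
  exact h

/-- Key localization bound: for `u0` in the support of `pU`, the per-`u0` covariance is
bounded by `ρ(pU)` times the per-`u0` standard deviations. -/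
lemma conc (pU : 𝒰 → ℝ) (hp : ∀ u, 0 ≤ pU u) (u0 : 𝒰) (h0 : pU u0 ≠ 0)
    (f : 𝒳 × 𝒰 → ℝ) (g : 𝒴 × 𝒰 → ℝ) :
    ccW W (FX f) (GY g) u0 ≤ rho W pU *
      (Real.sqrt (ccW W (FX f) (FX f) u0) * Real.sqrt (ccW W (GY g) (GY g) u0)) := by
  set F := FX f with hF
  set G := GY (𝒳 := 𝒳) g with hG
  by_cases hvw : 0 < ccW W F F u0 * ccW W G G u0
  · obtain ⟨hv, hw⟩ := pos_pos_of_mul_pos (ccW_self_nonneg W hW0 F u0)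
      (ccW_self_nonneg W hW0 G u0) hvw
    have hpu : 0 < pU u0 := (hp u0).lt_of_ne (Ne.symm h0)
    set f' : 𝒳 × 𝒰 → ℝ := fun p => if p.2 = u0 then f (p.1, u0) - mW W F u0 else 0 with hf'
    set g' : 𝒴 × 𝒰 → ℝ := fun p => if p.2 = u0 then g (p.1, u0) - mW W G u0 else 0 with hg'
    have hFX : FX f' = loc W F u0 := rfl
    have hGY : GY (𝒳 := 𝒳) g' = loc W G u0 := rfl
    have hC : ccov (jointOf pU W) Prod.snd (FX f') (GY g') = pU u0 * ccW W F G u0 := by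
      rw [hFX, hGY, ccov_jointOf W hW1]
      simp only [ccW_loc W hW0 hW1, mul_ite, mul_zero,
        Finset.sum_ite_eq' Finset.univ u0, Finset.mem_univ, if_true]
    have hVF : cvar (jointOf pU W) Prod.snd (FX f') = pU u0 * ccW W F F u0 := by
      rw [cvar, hFX, ccov_jointOf W hW1]
      simp only [ccW_loc W hW0 hW1, mul_ite, mul_zero,
        Finset.sum_ite_eq' Finset.univ u0, Finset.mem_univ, if_true]
    have hVG : cvar (jointOf pU W) Prod.snd (GY (𝒳 := 𝒳) g') = pU u0 * ccW W G G u0 := by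
      rw [cvar, hGY, ccov_jointOf W hW1]
      simp only [ccW_loc W hW0 hW1, mul_ite, mul_zero,
        Finset.sum_ite_eq' Finset.univ u0, Finset.mem_univ, if_true]
    have hguard : 0 < cvar (jointOf pU W) Prod.snd (FX f') *
        cvar (jointOf pU W) Prod.snd (GY (𝒳 := 𝒳) g') := by
      rw [hVF, hVG]
      exact mul_pos (mul_pos hpu hv) (mul_pos hpu hw)
    have hrho := ccorr_le_rho W hW0 hW1 pU hp f' g'
    unfold ccorr at hrho
    rw [if_pos hguard, hC, hVF, hVG] at hrho
    rw [Real.sqrt_mul hpu.le, Real.sqrt_mul hpu.le] at hrho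
    have hsq : Real.sqrt (pU u0) * Real.sqrt (ccW W F F u0) *
        (Real.sqrt (pU u0) * Real.sqrt (ccW W G G u0)) =
        pU u0 * (Real.sqrt (ccW W F F u0) * Real.sqrt (ccW W G G u0)) := by
      rw [mul_mul_mul_comm, Real.mul_self_sqrt hpu.le]
    rw [hsq, mul_div_mul_left _ _ (ne_of_gt hpu)] at hrho
    have hden : 0 < Real.sqrt (ccW W F F u0) * Real.sqrt (ccW W G G u0) :=
      mul_pos (Real.sqrt_pos.2 hv) (Real.sqrt_pos.2 hw)
    calc ccW W F G u0
        = ccW W F G u0 / (Real.sqrt (ccW W F F u0) * Real.sqrt (ccW W G G u0)) *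
          (Real.sqrt (ccW W F F u0) * Real.sqrt (ccW W G G u0)) :=
          (div_mul_cancel₀ _ hden.ne').symm
      _ ≤ _ := mul_le_mul_of_nonneg_right hrho hden.le
  · have h2 := ccW_sq_le W hW0 hW1 F G u0
    have hC0 : ccW W F G u0 ≤ 0 := by nlinarith [not_lt.1 hvw, sq_nonneg (ccW W F G u0)]
    have hR : 0 ≤ rho W pU *
        (Real.sqrt (ccW W F F u0) * Real.sqrt (ccW W G G u0)) :=
      mul_nonneg (rho_nonneg W hW0 hW1 pU hp)
        (mul_nonneg (Real.sqrt_nonneg _) (Real.sqrt_nonneg _))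
    linarith

lemma sum_sqrt_ccW_le (pU : 𝒰 → ℝ) (hp : ∀ u, 0 ≤ pU u) (F G : (𝒳 × 𝒴) × 𝒰 → ℝ) :
    ∑ u, pU u * (Real.sqrt (ccW W F F u) * Real.sqrt (ccW W G G u)) ≤
      Real.sqrt (∑ u, pU u * ccW W F F u) * Real.sqrt (∑ u, pU u * ccW W G G u) := by
  have step2 := wcs pU (fun u => Real.sqrt (ccW W F F u))
    (fun u => Real.sqrt (ccW W G G u)) hp
  simp only [Real.sq_sqrt (ccW_self_nonneg W hW0 F _),
    Real.sq_sqrt (ccW_self_nonneg W hW0 G _)] at step2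
  exact step2

lemma rho_mono (pU rU : 𝒰 → ℝ) (hp : ∀ u, 0 ≤ pU u) (hr : ∀ u, 0 ≤ rU u)
    (hsub : ∀ u, pU u ≠ 0 → rU u ≠ 0) : rho W pU ≤ rho W rU := by
  rw [rho_def]
  refine ciSup_le fun f => ciSup_le fun g => ?_
  unfold ccorr
  split_ifs with h
  · have hVF : cvar (jointOf pU W) Prod.snd (FX f)
        = ∑ u, pU u * ccW W (FX f) (FX f) u := ccov_jointOf W hW1 pU _ _
    have hVG : cvar (jointOf pU W) Prod.snd (GY (𝒳 := 𝒳) g)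
        = ∑ u, pU u * ccW W (GY (𝒳 := 𝒳) g) (GY (𝒳 := 𝒳) g) u := ccov_jointOf W hW1 pU _ _
    rw [hVF, hVG] at h
    rw [hVF, hVG, ccov_jointOf W hW1]
    obtain ⟨hA, hB⟩ := pos_pos_of_mul_pos
      (sum_ccW_self_nonneg W hW0 hW1 pU hp _)
      (sum_ccW_self_nonneg W hW0 hW1 pU hp _) h
    rw [div_le_iff₀ (mul_pos (Real.sqrt_pos.2 hA) (Real.sqrt_pos.2 hB))]
    calc ∑ u, pU u * ccW W (FX f) (GY (𝒳 := 𝒳) g) u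
        ≤ ∑ u, pU u * (rho W rU * (Real.sqrt (ccW W (FX f) (FX f) u) *
            Real.sqrt (ccW W (GY (𝒳 := 𝒳) g) (GY (𝒳 := 𝒳) g) u))) := by
          refine Finset.sum_le_sum fun u _ => ?_
          by_cases hu : pU u = 0
          · simp [hu]
          · exact mul_le_mul_of_nonneg_left (conc W hW0 hW1 rU hr u (hsub u hu) f g) (hp u)
      _ = rho W rU * ∑ u, pU u * (Real.sqrt (ccW W (FX f) (FX f) u) *
            Real.sqrt (ccW W (GY (𝒳 := 𝒳) g) (GY (𝒳 := 𝒳) g) u)) := by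
          rw [Finset.mul_sum]
          exact Finset.sum_congr rfl fun u _ => by ring
      _ ≤ rho W rU * (Real.sqrt (∑ u, pU u * ccW W (FX f) (FX f) u) *
            Real.sqrt (∑ u, pU u * ccW W (GY (𝒳 := 𝒳) g) (GY (𝒳 := 𝒳) g) u)) :=
          mul_le_mul_of_nonneg_left (sum_sqrt_ccW_le W hW0 hW1 pU hp _ _)
            (rho_nonneg W hW0 hW1 rU hr)
      _ = _ := by ring
  · exact rho_nonneg W hW0 hW1 rU hr

lemma ccov_le_rho (rU : 𝒰 → ℝ) (hr : ∀ u, 0 ≤ rU u) (f : 𝒳 × 𝒰 → ℝ) (g : 𝒴 × 𝒰 → ℝ) :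
    ∑ u, rU u * ccW W (FX f) (GY g) u ≤ rho W rU *
      (Real.sqrt (∑ u, rU u * ccW W (FX f) (FX f) u) *
       Real.sqrt (∑ u, rU u * ccW W (GY (𝒳 := 𝒳) g) (GY (𝒳 := 𝒳) g) u)) := by
  have hA0 := sum_ccW_self_nonneg W hW0 hW1 rU hr (FX f)
  have hB0 := sum_ccW_self_nonneg W hW0 hW1 rU hr (GY (𝒳 := 𝒳) g)
  by_cases h : 0 < (∑ u, rU u * ccW W (FX f) (FX f) u) *
      (∑ u, rU u * ccW W (GY (𝒳 := 𝒳) g) (GY (𝒳 := 𝒳) g) u)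
  · obtain ⟨hA, hB⟩ := pos_pos_of_mul_pos hA0 hB0 h
    have hcc := ccorr_le_rho W hW0 hW1 rU hr f g
    unfold ccorr at hcc
    have hVF : cvar (jointOf rU W) Prod.snd (FX f)
        = ∑ u, rU u * ccW W (FX f) (FX f) u := ccov_jointOf W hW1 rU _ _
    have hVG : cvar (jointOf rU W) Prod.snd (GY (𝒳 := 𝒳) g)
        = ∑ u, rU u * ccW W (GY (𝒳 := 𝒳) g) (GY (𝒳 := 𝒳) g) u := ccov_jointOf W hW1 rU _ _
    rw [hVF, hVG, ccov_jointOf W hW1, if_pos h] at hcc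
    exact (div_le_iff₀ (mul_pos (Real.sqrt_pos.2 hA) (Real.sqrt_pos.2 hB))).1 hcc
  · have h1 := sum_ccW_le W hW0 rU hr (FX f) (GY (𝒳 := 𝒳) g)
    have hAB : (∑ u, rU u * ccW W (FX f) (FX f) u) *
        (∑ u, rU u * ccW W (GY (𝒳 := 𝒳) g) (GY (𝒳 := 𝒳) g) u) = 0 :=
      le_antisymm (not_lt.1 h) (mul_nonneg hA0 hB0)
    have hs : Real.sqrt (∑ u, rU u * ccW W (FX f) (FX f) u) *
        Real.sqrt (∑ u, rU u * ccW W (GY (𝒳 := 𝒳) g) (GY (𝒳 := 𝒳) g) u) = 0 := by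
      rw [← Real.sqrt_mul hA0, hAB, Real.sqrt_zero]
    rw [hs, mul_zero]
    rw [hs] at h1
    exact h1

lemma rho_mix_le (pU qU : 𝒰 → ℝ) (hp : ∀ u, 0 ≤ pU u) (hq : ∀ u, 0 ≤ qU u)
    (l : ℝ) (hl : 0 ≤ l) (hl1 : l ≤ 1) :
    rho W (fun u => l * pU u + (1 - l) * qU u) ≤ max (rho W pU) (rho W qU) := by
  have hm : ∀ u, 0 ≤ l * pU u + (1 - l) * qU u := fun u =>
    add_nonneg (mul_nonneg hl (hp u)) (mul_nonneg (by linarith) (hq u))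
  have hmax0 : 0 ≤ max (rho W pU) (rho W qU) :=
    le_trans (rho_nonneg W hW0 hW1 pU hp) (le_max_left _ _)
  rw [rho_def]
  refine ciSup_le fun f => ciSup_le fun g => ?_
  set F := FX f with hF
  set G := GY (𝒳 := 𝒳) g with hG
  unfold ccorr
  split_ifs with h
  · have hVF : cvar (jointOf (fun u => l * pU u + (1 - l) * qU u) W) Prod.snd F
        = ∑ u, (l * pU u + (1 - l) * qU u) * ccW W F F u := ccov_jointOf W hW1 _ _ _
    have hVG : cvar (jointOf (fun u => l * pU u + (1 - l) * qU u) W) Prod.snd G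
        = ∑ u, (l * pU u + (1 - l) * qU u) * ccW W G G u := ccov_jointOf W hW1 _ _ _
    rw [hVF, hVG] at h
    rw [hVF, hVG, ccov_jointOf W hW1]
    have hApBp := sum_ccW_self_nonneg W hW0 hW1 pU hp F
    have hBp0 := sum_ccW_self_nonneg W hW0 hW1 pU hp G
    have hAq0 := sum_ccW_self_nonneg W hW0 hW1 qU hq F
    have hBq0 := sum_ccW_self_nonneg W hW0 hW1 qU hq G
    have hmixnn : ∀ H, 0 ≤ ∑ u, (l * pU u + (1 - l) * qU u) * ccW W H H u :=
      fun H => sum_ccW_self_nonneg W hW0 hW1 _ hm H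
    obtain ⟨hA, hB⟩ := pos_pos_of_mul_pos (hmixnn F) (hmixnn G) h
    rw [div_le_iff₀ (mul_pos (Real.sqrt_pos.2 hA) (Real.sqrt_pos.2 hB))]
    have hdec : ∀ H K : (𝒳 × 𝒴) × 𝒰 → ℝ,
        ∑ u, (l * pU u + (1 - l) * qU u) * ccW W H K u
          = l * ∑ u, pU u * ccW W H K u + (1 - l) * ∑ u, qU u * ccW W H K u := by
      intro H K
      rw [Finset.mul_sum, Finset.mul_sum, ← Finset.sum_add_distrib]
      exact Finset.sum_congr rfl fun u _ => by ring
    have hCp := ccov_le_rho W hW0 hW1 pU hp f g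
    have hCq := ccov_le_rho W hW0 hW1 qU hq f g
    rw [← hF, ← hG] at hCp hCq
    have h2cs := two_cs (∑ u, pU u * ccW W F F u) (∑ u, pU u * ccW W G G u)
      (∑ u, qU u * ccW W F F u) (∑ u, qU u * ccW W G G u) l
      hApBp hBp0 hAq0 hBq0 hl hl1
    calc ∑ u, (l * pU u + (1 - l) * qU u) * ccW W F G u
        = l * ∑ u, pU u * ccW W F G u + (1 - l) * ∑ u, qU u * ccW W F G u := hdec F G
      _ ≤ l * (rho W pU * (Real.sqrt (∑ u, pU u * ccW W F F u) *
              Real.sqrt (∑ u, pU u * ccW W G G u))) +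
          (1 - l) * (rho W qU * (Real.sqrt (∑ u, qU u * ccW W F F u) *
              Real.sqrt (∑ u, qU u * ccW W G G u))) :=
          add_le_add (mul_le_mul_of_nonneg_left hCp hl)
            (mul_le_mul_of_nonneg_left hCq (by linarith))
      _ ≤ l * (max (rho W pU) (rho W qU) * (Real.sqrt (∑ u, pU u * ccW W F F u) *
              Real.sqrt (∑ u, pU u * ccW W G G u))) +
          (1 - l) * (max (rho W pU) (rho W qU) * (Real.sqrt (∑ u, qU u * ccW W F F u) *
              Real.sqrt (∑ u, qU u * ccW W G G u))) := by
          refine add_le_add ?_ ?_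
          · refine mul_le_mul_of_nonneg_left (mul_le_mul_of_nonneg_right (le_max_left _ _)
              (mul_nonneg (Real.sqrt_nonneg _) (Real.sqrt_nonneg _))) hl
          · refine mul_le_mul_of_nonneg_left (mul_le_mul_of_nonneg_right (le_max_right _ _)
              (mul_nonneg (Real.sqrt_nonneg _) (Real.sqrt_nonneg _))) (by linarith)
      _ = max (rho W pU) (rho W qU) *
          (l * (Real.sqrt (∑ u, pU u * ccW W F F u) * Real.sqrt (∑ u, pU u * ccW W G G u)) +
           (1 - l) * (Real.sqrt (∑ u, qU u * ccW W F F u) *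
              Real.sqrt (∑ u, qU u * ccW W G G u))) := by ring
      _ ≤ max (rho W pU) (rho W qU) *
          (Real.sqrt (l * ∑ u, pU u * ccW W F F u + (1 - l) * ∑ u, qU u * ccW W F F u) *
           Real.sqrt (l * ∑ u, pU u * ccW W G G u + (1 - l) * ∑ u, qU u * ccW W G G u)) :=
          mul_le_mul_of_nonneg_left h2cs hmax0
      _ = _ := by rw [← hdec F F, ← hdec G G]
  · exact hmax0

lemma rho_mix_eq (pU qU : 𝒰 → ℝ) (hp : ∀ u, 0 ≤ pU u) (hq : ∀ u, 0 ≤ qU u)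
    (l : ℝ) (hl : 0 < l) (hl1 : l < 1) :
    rho W (fun u => l * pU u + (1 - l) * qU u) = max (rho W pU) (rho W qU) := by
  have hm : ∀ u, 0 ≤ l * pU u + (1 - l) * qU u := fun u =>
    add_nonneg (mul_nonneg hl.le (hp u)) (mul_nonneg (by linarith) (hq u))
  refine le_antisymm (rho_mix_le W hW0 hW1 pU qU hp hq l hl.le hl1.le) (max_le ?_ ?_)
  · refine rho_mono W hW0 hW1 pU _ hp hm fun u hu => ?_
    have : 0 < l * pU u + (1 - l) * qU u :=
      add_pos_of_pos_of_nonneg (mul_pos hl ((hp u).lt_of_ne (Ne.symm hu)))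
        (mul_nonneg (by linarith) (hq u))
    exact this.ne'
  · refine rho_mono W hW0 hW1 qU _ hq hm fun u hu => ?_
    have : 0 < l * pU u + (1 - l) * qU u :=
      add_pos_of_nonneg_of_pos (mul_nonneg hl.le (hp u))
        (mul_pos (by linarith) ((hq u).lt_of_ne (Ne.symm hu)))
    exact this.ne'

end Main

/-- Concavity of conditional maximal correlation in `P_U`. For a fixed
conditional distribution `P_{XY|U}`, the map `P_U ↦ ρ_m(X;Y|U)` is concave; in fact, for
`λ ∈ (0,1)` the conditional maximal correlation under the mixture `λ·P_U + (1−λ)·Q_U`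
equals the maximum of the conditional maximal correlations under `P_U` and under `Q_U`. -/
theorem maxCorr_concave_in_pU {𝒳 𝒴 𝒰 : Type} [Fintype 𝒳] [Fintype 𝒴] [Fintype 𝒰]
    (W : 𝒰 → 𝒳 × 𝒴 → ℝ)
    (hW : ∀ u, (∀ a, 0 ≤ W u a) ∧ ∑ a, W u a = 1)
    (pU qU : 𝒰 → ℝ) (hpU : (∀ u, 0 ≤ pU u) ∧ ∑ u, pU u = 1)
    (hqU : (∀ u, 0 ≤ qU u) ∧ ∑ u, qU u = 1) :
    (∀ l : ℝ, 0 ≤ l → l ≤ 1 →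
      l * maxCorr (jointOf pU W) Prod.snd (fun a => a.1.1) (fun a => a.1.2) +
        (1 - l) * maxCorr (jointOf qU W) Prod.snd (fun a => a.1.1) (fun a => a.1.2) ≤
      maxCorr (jointOf (fun u => l * pU u + (1 - l) * qU u) W) Prod.snd
        (fun a => a.1.1) (fun a => a.1.2)) ∧
    (∀ l : ℝ, 0 < l → l < 1 →
      maxCorr (jointOf (fun u => l * pU u + (1 - l) * qU u) W) Prod.snd
        (fun a => a.1.1) (fun a => a.1.2) =
      max (maxCorr (jointOf pU W) Prod.snd (fun a => a.1.1) (fun a => a.1.2))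
        (maxCorr (jointOf qU W) Prod.snd (fun a => a.1.1) (fun a => a.1.2))) := by
  obtain ⟨hp0, -⟩ := hpU
  obtain ⟨hq0, -⟩ := hqU
  have hW0 : ∀ u a, 0 ≤ W u a := fun u => (hW u).1
  have hW1 : ∀ u, ∑ a, W u a = 1 := fun u => (hW u).2
  constructor
  · intro l hl0 hl1
    show l * rho W pU + (1 - l) * rho W qU ≤ rho W (fun u => l * pU u + (1 - l) * qU u)
    rcases eq_or_lt_of_le hl0 with h0 | h0
    · have hfun : (fun u => l * pU u + (1 - l) * qU u) = qU := by
        funext u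
        rw [← h0]
        ring
      rw [hfun, ← h0]
      ring_nf
      exact le_refl _
    rcases eq_or_lt_of_le hl1 with h1 | h1
    · have hfun : (fun u => l * pU u + (1 - l) * qU u) = pU := by
        funext u
        rw [h1]
        ring
      rw [hfun, h1]
      ring_nf
      exact le_refl _
    · rw [rho_mix_eq W hW0 hW1 pU qU hp0 hq0 l h0 h1]
      have h2 := le_max_left (rho W pU) (rho W qU)
      have h3 := le_max_right (rho W pU) (rho W qU)
      nlinarith [mul_le_mul_of_nonneg_left h2 hl0,
        mul_le_mul_of_nonneg_left h3 (sub_nonneg.2 hl1)]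
  · intro l hl0 hl1
    exact rho_mix_eq W hW0 hW1 pU qU hp0 hq0 l hl0 hl1


end GCI
end
end
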